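/- Let t ∈ ℂ \ {0,1} and ρ as in the previous construction: ρ = Σᵢ λᵢ (aᵢaᵢ†)⊗(φᵢφᵢ†) with λ₁=|t²−t|, λ₂=|t−1|, λ₃=|t|, λ₄=1, aᵢ the columns of [[1,0,1,t],[0,1,1,1]] and φᵢ the (unnormalized) Bell vectors (1,0,0,1)ᵀ, (1,0,0,−1)ᵀ, (0,1,1,0)ᵀ, (0,1,−1,0)ᵀ. Then the Lorentz invariant I_ρ = Tr(ρᵀ ε₃ ρ ε₃) equals 0. -/

import Mathlib

open Matrix

noncomputable def eps : Matrix (Fin 2) (Fin 2) ℂ := !![0, 1; -1, 0]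

/-- ε₃ = ε ⊗ ε ⊗ ε on the index type Fin 2 × Fin 2 × Fin 2. -/
noncomputable def eps3 : Matrix (Fin 2 × Fin 2 × Fin 2) (Fin 2 × Fin 2 × Fin 2) ℂ :=
  Matrix.of fun i j => eps i.1 j.1 * eps i.2.1 j.2.1 * eps i.2.2 j.2.2

/-- The four vectors (1,0), (0,1), (1,1), (t,1). -/
def avecs (t : ℂ) : Fin 4 → Fin 2 → ℂ := ![![1, 0], ![0, 1], ![1, 1], ![t, 1]]

/-- The four (unnormalized) Bell vectors in ℂ² ⊗ ℂ². -/
noncomputable def phiv : Fin 4 → Fin 2 × Fin 2 → ℂ :=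
  fun j p => (![!![1, 0; 0, 1], !![1, 0; 0, -1], !![0, 1; 1, 0], !![0, 1; -1, 0]] j) p.1 p.2

/-- The bipartite product vectors eᵢ = aᵢ ⊗ φᵢ in ℂ² ⊗ (ℂ² ⊗ ℂ²). -/
noncomputable def evec (t : ℂ) (i : Fin 4) : Fin 2 × Fin 2 × Fin 2 → ℂ :=
  fun p => avecs t i p.1 * phiv i p.2

/-- The weights λ₁ = |t²−t|, λ₂ = |t−1|, λ₃ = |t|, λ₄ = 1. -/
noncomputable def lam (t : ℂ) : Fin 4 → ℂ :=
  ![(‖t ^ 2 - t‖ : ℂ), (‖t - 1‖ : ℂ), (‖t‖ : ℂ), 1]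

/-- The type-II state ρ(t) = Σ λᵢ eᵢeᵢ†. -/
noncomputable def rhoT (t : ℂ) : Matrix (Fin 2 × Fin 2 × Fin 2) (Fin 2 × Fin 2 × Fin 2) ℂ :=
  ∑ i, lam t i • vecMulVec (evec t i) (star (evec t i))

lemma rowEcol {n : Type*} [Fintype n] (E : Matrix n n ℂ) (x y : n → ℂ) :
    replicateRow Unit x * E * replicateCol Unit y = (x ⬝ᵥ E *ᵥ y) • (1 : Matrix Unit Unit ℂ) := by
  ext i j
  simp only [mul_apply, replicateRow_apply, replicateCol_apply, dotProduct, mulVec, Matrix.smul_apply,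
    one_apply, Unique.eq_default i, Unique.eq_default j, if_pos rfl, smul_eq_mul, mul_one,
    Finset.mul_sum, Finset.sum_mul, dotProduct]
  rw [Finset.sum_comm]
  exact Finset.sum_congr rfl fun _ _ => Finset.sum_congr rfl fun _ _ => by norm_num; ring

lemma key {n : Type*} [Fintype n] (a b c d : n → ℂ) (E : Matrix n n ℂ) :
    ((vecMulVec a b)ᵀ * E * vecMulVec c d * E).trace =
      (a ⬝ᵥ E *ᵥ c) * (d ⬝ᵥ E *ᵥ b) := by
  rw [vecMulVec_eq Unit a b, vecMulVec_eq Unit c d, transpose_mul, transpose_replicateCol, transpose_replicateRow]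
  have h1 : replicateCol Unit b * replicateRow Unit a * E * (replicateCol Unit c * replicateRow Unit d) * E
      = (a ⬝ᵥ E *ᵥ c) • (replicateCol Unit b * replicateRow Unit d * E) := by
    have : replicateCol Unit b * replicateRow Unit a * E * (replicateCol Unit c * replicateRow Unit d) * E
        = replicateCol Unit b * (replicateRow Unit a * E * replicateCol Unit c) * (replicateRow Unit d * E) := by
      simp only [Matrix.mul_assoc]
    rw [this, rowEcol, Matrix.mul_smul, Matrix.mul_one, Matrix.smul_mul, Matrix.mul_assoc]
  rw [h1, trace_smul, smul_eq_mul]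
  congr 1
  rw [Matrix.mul_assoc, trace_mul_comm, rowEcol, trace_smul, trace_one, smul_eq_mul]
  simp

set_option maxHeartbeats 2000000 in
lemma Bzero (t : ℂ) (i j : Fin 4) : evec t i ⬝ᵥ eps3 *ᵥ evec t j = 0 := by
  fin_cases i <;> fin_cases j <;>
    · simp [evec, avecs, phiv, eps3, eps, dotProduct, mulVec, Fintype.sum_prod_type,
        Fin.sum_univ_two]
      try ring

theorem stmt17 (t : ℂ) (h0 : t ≠ 0) (h1 : t ≠ 1) :
    ((rhoT t)ᵀ * eps3 * rhoT t * eps3).trace = 0 := by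
  simp only [rhoT, transpose_sum, transpose_smul, Matrix.sum_mul, Matrix.mul_sum,
    Matrix.smul_mul, Matrix.mul_smul, trace_sum, trace_smul, key, Bzero, zero_mul,
    smul_zero, Finset.sum_const_zero]
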